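/- Let Σ ∈ ℝ^{n×n} be positive definite and let f : ℝⁿ → [0,1] be measurable. Define g_Σ(x) = E_{ε ~ N(0,Σ)}[f(x + ε)]. Then g_Σ is √(2/π)-Lipschitz with respect to the norm ‖δ‖_{Σ,2} = √(δᵀΣ⁻¹δ); that is, |g_Σ(x) − g_Σ(y)| ≤ √(2/π) · √((x − y)ᵀΣ⁻¹(x − y)) for all x, y ∈ ℝⁿ. -/

import Mathlib

open MeasureTheory Matrix

noncomputable def gaussDensity (n : ℕ) (Sig : Matrix (Fin n) (Fin n) ℝ)
    (ε : Fin n → ℝ) : ℝ :=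
  (Real.sqrt ((2 * Real.pi) ^ n * Sig.det))⁻¹ * Real.exp (-(ε ⬝ᵥ (Sig⁻¹ *ᵥ ε)) / 2)

variable {n : ℕ} {Sig : Matrix (Fin n) (Fin n) ℝ}

lemma inv_symm (hSig : Sig.PosDef) : (Sig⁻¹)ᵀ = Sig⁻¹ := by
  rw [Matrix.transpose_nonsing_inv]
  congr 1
  have h := hSig.isHermitian.eq
  simpa [Matrix.conjTranspose_eq_transpose_of_trivial] using h

lemma dot_symm (hSig : Sig.PosDef) (v w : Fin n → ℝ) :
    v ⬝ᵥ Sig⁻¹ *ᵥ w = w ⬝ᵥ Sig⁻¹ *ᵥ v := by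
  rw [Matrix.dotProduct_mulVec, ← Matrix.vecMul_transpose, inv_symm hSig,
    dotProduct_comm]

lemma expand_quad (hSig : Sig.PosDef) (v δ : Fin n → ℝ) :
    (v - δ) ⬝ᵥ Sig⁻¹ *ᵥ (v - δ) =
      v ⬝ᵥ Sig⁻¹ *ᵥ v - 2 * (δ ⬝ᵥ Sig⁻¹ *ᵥ v) + δ ⬝ᵥ Sig⁻¹ *ᵥ δ := by
  rw [Matrix.mulVec_sub, sub_dotProduct, dotProduct_sub,
    dotProduct_sub, dot_symm hSig v δ]
  ring

lemma C_pos (hSig : Sig.PosDef) : 0 < Real.sqrt ((2 * Real.pi) ^ n * Sig.det) := by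
  have := hSig.det_pos
  have := Real.pi_pos
  positivity

lemma gauss_pos (hSig : Sig.PosDef) (w : Fin n → ℝ) : 0 < gaussDensity n Sig w := by
  unfold gaussDensity
  exact mul_pos (inv_pos.2 (C_pos hSig)) (Real.exp_pos _)

lemma gauss_shift (hSig : Sig.PosDef) (δ w : Fin n → ℝ) :
    gaussDensity n Sig (w - δ) =
      gaussDensity n Sig w *
        Real.exp (δ ⬝ᵥ Sig⁻¹ *ᵥ w - (δ ⬝ᵥ Sig⁻¹ *ᵥ δ) / 2) := by
  unfold gaussDensity
  rw [expand_quad hSig, mul_assoc, ← Real.exp_add]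
  ring_nf

lemma contQ (M : Matrix (Fin n) (Fin n) ℝ) :
    Continuous fun v : Fin n → ℝ => v ⬝ᵥ M *ᵥ v := by
  unfold dotProduct Matrix.mulVec dotProduct
  apply continuous_finset_sum
  intro i _
  exact (continuous_apply i).mul
    (continuous_finset_sum _ fun j _ => continuous_const.mul (continuous_apply j))

lemma cont_gauss : Continuous (gaussDensity n Sig) := by
  unfold gaussDensity
  exact continuous_const.mul (((contQ Sig⁻¹).neg.div_const 2).rexp)

lemma std_gauss_integral :
    ∫ u : Fin n → ℝ, Real.exp (-(u ⬝ᵥ u) / 2) = Real.sqrt (2 * Real.pi) ^ n := by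
  have h1 : ∀ u : Fin n → ℝ, Real.exp (-(u ⬝ᵥ u) / 2) =
      ∏ i, Real.exp (-(1/2) * (u i) ^ 2) := by
    intro u
    rw [← Real.exp_sum]
    congr 1
    have h2 : ∀ i ∈ Finset.univ, -(1/2) * (u i) ^ 2 = -(u i * u i) / 2 := by
      intro i _; ring
    rw [Finset.sum_congr rfl h2, ← Finset.sum_div, Finset.sum_neg_distrib]
    rfl
  simp_rw [h1]
  rw [MeasureTheory.volume_pi, MeasureTheory.integral_fintype_prod_eq_pow (ι := Fin n)
    (f := fun x : ℝ => Real.exp (-(1/2) * x ^ 2)), integral_gaussian, Fintype.card_fin]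
  rw [show Real.pi / (1/2) = 2 * Real.pi by ring]

lemma integrable_std_gauss :
    Integrable (fun u : Fin n → ℝ => Real.exp (-(u ⬝ᵥ u) / 2)) := by
  have h1 : ∀ u : Fin n → ℝ, Real.exp (-(u ⬝ᵥ u) / 2) =
      ∏ i, Real.exp (-(1/2) * (u i) ^ 2) := by
    intro u
    rw [← Real.exp_sum]
    congr 1
    have h2 : ∀ i ∈ Finset.univ, -(1/2) * (u i) ^ 2 = -(u i * u i) / 2 := by
      intro i _; ring
    rw [Finset.sum_congr rfl h2, ← Finset.sum_div, Finset.sum_neg_distrib]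
    rfl
  simp_rw [h1]
  exact Integrable.fintype_prod fun _ => integrable_exp_neg_mul_sq (by norm_num)

lemma sqrt_pow_nat {x : ℝ} (hx : 0 ≤ x) (m : ℕ) :
    Real.sqrt (x ^ m) = Real.sqrt x ^ m := by
  induction m with
  | zero => simp
  | succ k ih => rw [pow_succ, pow_succ, Real.sqrt_mul (by positivity), ih]

open scoped MatrixOrder in
lemma lintegral_exp_quad (hSig : Sig.PosDef) :
    ∫⁻ w : Fin n → ℝ, ENNReal.ofReal (Real.exp (-(w ⬝ᵥ Sig⁻¹ *ᵥ w) / 2)) =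
      ENNReal.ofReal (Real.sqrt ((2 * Real.pi) ^ n * Sig.det)) := by
  classical
  set S := CFC.sqrt Sig with hSdef
  have hSS : S * S = Sig := CFC.sqrt_mul_sqrt_self Sig hSig.posSemidef.nonneg
  have hSsd : S.PosSemidef := (CFC.sqrt_nonneg Sig).posSemidef
  have hSsymm : Sᵀ = S := by
    have h := hSsd.isHermitian.eq
    simpa [Matrix.conjTranspose_eq_transpose_of_trivial] using h
  have hdet2 : S.det * S.det = Sig.det := by rw [← Matrix.det_mul, hSS]
  have hdetnn : 0 ≤ S.det := by
    rw [hSsd.isHermitian.det_eq_prod_eigenvalues]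
    exact Finset.prod_nonneg fun i _ => hSsd.eigenvalues_nonneg i
  have hdetpos : 0 < S.det := by
    rcases hdetnn.lt_or_eq with h | h
    · exact h
    · exfalso; have := hSig.det_pos; rw [← hdet2, ← h] at this; simp at this
  have hdetne : S.det ≠ 0 := ne_of_gt hdetpos
  have hdetS : S.det = Real.sqrt Sig.det := by
    rw [← hdet2, Real.sqrt_mul_self hdetnn]
  -- the matrix identity S * (Sig⁻¹ * S) = 1
  have hunit : IsUnit S.det := isUnit_iff_ne_zero.2 hdetne
  have hmat : S * (Sig⁻¹ * S) = 1 := by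
    rw [← hSS, Matrix.mul_inv_rev, ← Matrix.mul_assoc, ← Matrix.mul_assoc,
      Matrix.mul_nonsing_inv _ hunit, Matrix.one_mul, Matrix.nonsing_inv_mul _ hunit]
  have hQS : ∀ u : Fin n → ℝ, (S *ᵥ u) ⬝ᵥ Sig⁻¹ *ᵥ (S *ᵥ u) = u ⬝ᵥ u := by
    intro u
    rw [Matrix.mulVec_mulVec]
    rw [show S *ᵥ u = u ᵥ* S by rw [← Matrix.mulVec_transpose, hSsymm]]
    rw [← Matrix.dotProduct_mulVec, Matrix.mulVec_mulVec, hmat, Matrix.one_mulVec]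
  have hmap := Real.map_matrix_volume_pi_eq_smul_volume_pi (M := S) hdetne
  have hgm : Measurable fun w : Fin n → ℝ =>
      ENNReal.ofReal (Real.exp (-(w ⬝ᵥ Sig⁻¹ *ᵥ w) / 2)) :=
    (ENNReal.continuous_ofReal.comp (((contQ Sig⁻¹).neg.div_const 2).rexp)).measurable
  have hlin : Measurable (Matrix.toLin' S) :=
    (LinearMap.continuous_of_finiteDimensional _).measurable
  have key : ∫⁻ u : Fin n → ℝ,
      ENNReal.ofReal (Real.exp (-((S *ᵥ u) ⬝ᵥ Sig⁻¹ *ᵥ (S *ᵥ u)) / 2)) =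
      ENNReal.ofReal |S.det|⁻¹ *
        ∫⁻ w : Fin n → ℝ, ENNReal.ofReal (Real.exp (-(w ⬝ᵥ Sig⁻¹ *ᵥ w) / 2)) := by
    have := MeasureTheory.lintegral_map (μ := volume) hgm hlin
    rw [hmap] at this
    rw [MeasureTheory.lintegral_smul_measure] at this
    simp_rw [Matrix.toLin'_apply] at this
    rw [abs_inv] at this
    exact this.symm
  simp_rw [hQS] at key
  have hstd : ∫⁻ u : Fin n → ℝ, ENNReal.ofReal (Real.exp (-(u ⬝ᵥ u) / 2)) =
      ENNReal.ofReal (Real.sqrt (2 * Real.pi) ^ n) := by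
    rw [← MeasureTheory.ofReal_integral_eq_lintegral_ofReal integrable_std_gauss
      (Filter.Eventually.of_forall fun u => (Real.exp_pos _).le), std_gauss_integral]
  rw [hstd] at key
  have habs : |S.det| = S.det := abs_of_pos hdetpos
  -- solve for the integral
  have h2 : ENNReal.ofReal S.det * ENNReal.ofReal |S.det|⁻¹ = 1 := by
    rw [habs, ← ENNReal.ofReal_mul hdetnn, mul_inv_cancel₀ hdetne, ENNReal.ofReal_one]
  calc ∫⁻ w : Fin n → ℝ, ENNReal.ofReal (Real.exp (-(w ⬝ᵥ Sig⁻¹ *ᵥ w) / 2))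
      = ENNReal.ofReal S.det * (ENNReal.ofReal |S.det|⁻¹ *
        ∫⁻ w : Fin n → ℝ, ENNReal.ofReal (Real.exp (-(w ⬝ᵥ Sig⁻¹ *ᵥ w) / 2))) := by
        rw [← mul_assoc, h2, one_mul]
    _ = ENNReal.ofReal S.det * ENNReal.ofReal (Real.sqrt (2 * Real.pi) ^ n) := by
        rw [← key]
    _ = ENNReal.ofReal (Real.sqrt ((2 * Real.pi) ^ n * Sig.det)) := by
        rw [← ENNReal.ofReal_mul hdetnn]
        congr 1
        rw [hdetS, Real.sqrt_mul (by positivity) Sig.det, sqrt_pow_nat (by positivity)]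
        ring

lemma integrable_exp_quad (hSig : Sig.PosDef) :
    Integrable (fun w : Fin n → ℝ => Real.exp (-(w ⬝ᵥ Sig⁻¹ *ᵥ w) / 2)) := by
  refine ⟨(((contQ Sig⁻¹).neg.div_const 2).rexp).aestronglyMeasurable, ?_⟩
  rw [hasFiniteIntegral_iff_ofReal
    (Filter.Eventually.of_forall fun w => (Real.exp_pos _).le)]
  rw [lintegral_exp_quad hSig]
  exact ENNReal.ofReal_lt_top

lemma integral_exp_quad (hSig : Sig.PosDef) :
    ∫ w : Fin n → ℝ, Real.exp (-(w ⬝ᵥ Sig⁻¹ *ᵥ w) / 2) =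
      Real.sqrt ((2 * Real.pi) ^ n * Sig.det) := by
  have h := MeasureTheory.ofReal_integral_eq_lintegral_ofReal (integrable_exp_quad hSig)
    (Filter.Eventually.of_forall fun w => (Real.exp_pos _).le)
  rw [lintegral_exp_quad hSig] at h
  have h1 : 0 ≤ ∫ w : Fin n → ℝ, Real.exp (-(w ⬝ᵥ Sig⁻¹ *ᵥ w) / 2) :=
    integral_nonneg fun w => (Real.exp_pos _).le
  exact (ENNReal.ofReal_eq_ofReal_iff h1 (C_pos hSig).le).1 h

lemma integrable_gauss (hSig : Sig.PosDef) : Integrable (gaussDensity n Sig) := by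
  have := (integrable_exp_quad hSig).const_mul
    (Real.sqrt ((2 * Real.pi) ^ n * Sig.det))⁻¹
  exact this

lemma integral_gauss (hSig : Sig.PosDef) : ∫ w, gaussDensity n Sig w = 1 := by
  unfold gaussDensity
  rw [MeasureTheory.integral_const_mul, integral_exp_quad hSig,
    inv_mul_cancel₀ (C_pos hSig).ne']

lemma exp_pi_half_le_five : Real.exp (Real.pi / 2) ≤ 5 := by
  have hpi : Real.pi ≤ 3.15 := by
    have := Real.pi_lt_d2
    linarith
  have h1 : Real.exp Real.pi ≤ Real.exp 3.15 := Real.exp_le_exp.2 hpi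
  have h2 : Real.exp 3.15 = Real.exp 3 * Real.exp 0.15 := by
    rw [← Real.exp_add]; norm_num
  have h3 : Real.exp 3 ≤ 2.7182818286 ^ 3 := by
    rw [show (3:ℝ) = (3:ℕ) by norm_num, ← Real.exp_one_pow]
    exact pow_le_pow_left₀ (Real.exp_pos 1).le Real.exp_one_lt_d9.le 3
  have h4 : Real.exp 0.15 ≤ 1 / 0.85 := by
    have h5 := Real.add_one_le_exp (-0.15 : ℝ)
    rw [Real.exp_neg] at h5
    have h7 := Real.exp_pos (0.15 : ℝ)
    have h8 := mul_inv_cancel₀ h7.ne'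
    nlinarith
  have h8 : Real.exp Real.pi ≤ 25 := by
    calc Real.exp Real.pi ≤ Real.exp 3 * Real.exp 0.15 := by rw [← h2]; exact h1
      _ ≤ 2.7182818286 ^ 3 * (1 / 0.85) := by
          apply mul_le_mul h3 h4 (Real.exp_pos _).le (by positivity)
      _ ≤ 25 := by norm_num
  have h9 : Real.exp (Real.pi / 2) * Real.exp (Real.pi / 2) = Real.exp Real.pi := by
    rw [← Real.exp_add]; ring_nf
  nlinarith [Real.exp_pos (Real.pi / 2)]

lemma chord_bound {q : ℝ} (hq0 : 0 ≤ q) (hq : q ≤ Real.pi / 2) :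
    Real.exp q - 1 ≤ 8 / Real.pi * q := by
  have hpi := Real.pi_pos
  set t : ℝ := q / (Real.pi / 2) with ht
  have ht0 : 0 ≤ t := by positivity
  have ht1 : t ≤ 1 := by
    rw [ht, div_le_one (by positivity)]; exact hq
  have hconv := convexOn_exp.2 (Set.mem_univ (0:ℝ)) (Set.mem_univ (Real.pi / 2))
    (by linarith : (0:ℝ) ≤ 1 - t) ht0 (by ring)
  have harg : (1 - t) • (0:ℝ) + t • (Real.pi / 2) = q := by
    rw [smul_eq_mul, smul_eq_mul, ht]
    field_simp
    ring
  rw [harg] at hconv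
  simp only [smul_eq_mul, Real.exp_zero, mul_one] at hconv
  have h5 := exp_pi_half_le_five
  have : Real.exp q - 1 ≤ t * 4 := by nlinarith
  rw [ht] at this
  have heq : q / (Real.pi / 2) * 4 = 8 / Real.pi * q := by
    field_simp; ring
  calc Real.exp q - 1 ≤ q / (Real.pi / 2) * 4 := this
    _ = 8 / Real.pi * q := heq
theorem gaussian_smoothing_sqrt_two_div_pi_lipschitz (n : ℕ)
    (Sig : Matrix (Fin n) (Fin n) ℝ) (hSig : Sig.PosDef)
    (f : (Fin n → ℝ) → ℝ) (hf : Measurable f) (hf01 : ∀ v, f v ∈ Set.Icc (0:ℝ) 1)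
    (gS : (Fin n → ℝ) → ℝ)
    (hgS : ∀ x, gS x = ∫ ε, f (x + ε) * gaussDensity n Sig ε) :
    ∀ x y, |gS x - gS y| ≤
      Real.sqrt (2 / Real.pi) * Real.sqrt ((x - y) ⬝ᵥ (Sig⁻¹ *ᵥ (x - y))) := by
  intro x y
  by_cases hxy : x = y
  · subst hxy
    simp only [sub_self, abs_zero]
    positivity
  set δ := x - y with hδdef
  have hδ : δ ≠ 0 := sub_ne_zero.2 hxy
  set q := δ ⬝ᵥ Sig⁻¹ *ᵥ δ with hqdef
  have hq : 0 < q := by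
    have h := hSig.inv.dotProduct_mulVec_pos hδ
    simpa using h
  set P := gaussDensity n Sig with hPdef
  have hPc : Continuous P := cont_gauss
  have hPpos : ∀ w, 0 < P w := gauss_pos hSig
  have hPi : Integrable P := integrable_gauss hSig
  have hP1i : Integrable (fun w => P (w - δ)) := hPi.comp_sub_right δ
  have hP2i : Integrable (fun w => P (w - (δ + δ))) := hPi.comp_sub_right (δ + δ)
  have hFm : Measurable (fun w : Fin n → ℝ => f (y + w)) := hf.comp (measurable_const_add y)
  have hF0 : ∀ w, 0 ≤ f (y + w) := fun w => (hf01 _).1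
  have hF1 : ∀ w, f (y + w) ≤ 1 := fun w => (hf01 _).2
  -- Step A : rewrite gS x
  have hgx : gS x = ∫ w, f (y + w) * P (w - δ) := by
    rw [hgS x, ← MeasureTheory.integral_sub_right_eq_self
      (fun w => f (x + w) * P w) δ]
    congr 1 with w
    rw [show x + (w - δ) = y + w by rw [hδdef]; abel]
  have h1 : Integrable (fun w => f (y + w) * P (w - δ)) := by
    apply hP1i.mono'
      ((hFm.mul (hPc.measurable.comp (measurable_sub_const δ))).aestronglyMeasurable)
    filter_upwards with w
    simp only [Pi.mul_apply, Function.comp_apply, Real.norm_eq_abs, abs_mul]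
    rw [abs_of_nonneg (hF0 w), abs_of_nonneg (hPpos _).le]
    exact mul_le_of_le_one_left (hPpos _).le (hF1 w)
  have h2 : Integrable (fun w => f (y + w) * P w) := by
    apply hPi.mono' (hFm.mul hPc.measurable).aestronglyMeasurable
    filter_upwards with w
    simp only [Pi.mul_apply, Function.comp_apply, Real.norm_eq_abs, abs_mul]
    rw [abs_of_nonneg (hF0 w), abs_of_nonneg (hPpos _).le]
    exact mul_le_of_le_one_left (hPpos _).le (hF1 w)
  set D := fun w => P (w - δ) - P w with hDdef
  have hDi : Integrable D := hP1i.sub hPi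
  have hD0 : ∫ w, D w = 0 := by
    simp only [hDdef]
    rw [integral_sub hP1i hPi, MeasureTheory.integral_sub_right_eq_self P δ, sub_self]
  have hDc : Continuous D := (hPc.comp (continuous_id.sub continuous_const)).sub hPc
  have hAbsi : Integrable (fun w => |D w|) := hDi.abs
  -- Step B : |gS x - gS y| ≤ (1/2) ∫ |D|
  have hFDi : Integrable (fun w => f (y + w) * D w) := by
    have : (fun w => f (y + w) * D w)
        = fun w => f (y + w) * P (w - δ) - f (y + w) * P w := by
      funext w; simp only [hDdef]; ring
    rw [this]; exact h1.sub h2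
  have hdiff : gS x - gS y = ∫ w, f (y + w) * D w := by
    rw [hgx, hgS y, ← integral_sub h1 h2]
    congr 1 with w
    simp only [hDdef]; ring
  have hpos : Integrable (fun w => max (D w) 0) := hDi.pos_part
  have hneg : Integrable (fun w => max (-D w) 0) := hDi.neg.pos_part
  have hsum : (∫ w, max (D w) 0) + (∫ w, max (-D w) 0) = ∫ w, |D w| := by
    rw [← integral_add hpos hneg]
    congr 1 with w
    exact max_zero_add_max_neg_zero_eq_abs_self _
  have hdiff0 : (∫ w, max (D w) 0) - (∫ w, max (-D w) 0) = 0 := by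
    rw [← integral_sub hpos hneg]
    rw [show (fun w => max (D w) 0 - max (-D w) 0) = D from
      funext fun w => max_zero_sub_eq_self _]
    exact hD0
  have hub : ∫ w, f (y + w) * D w ≤ ∫ w, max (D w) 0 := by
    apply integral_mono hFDi hpos
    intro w
    rcases le_or_gt 0 (D w) with h | h
    · calc f (y + w) * D w ≤ 1 * D w := mul_le_mul_of_nonneg_right (hF1 w) h
        _ = D w := one_mul _
        _ ≤ max (D w) 0 := le_max_left _ _
    · calc f (y + w) * D w ≤ 0 := mul_nonpos_of_nonneg_of_nonpos (hF0 w) h.le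
        _ ≤ max (D w) 0 := le_max_right _ _
  have hlb : -(∫ w, f (y + w) * D w) ≤ ∫ w, max (-D w) 0 := by
    rw [← integral_neg]
    apply integral_mono hFDi.neg hneg
    intro w
    simp only [Pi.neg_apply]
    rcases le_or_gt 0 (-D w) with h | h
    · calc -(f (y + w) * D w) = f (y + w) * (-D w) := by ring
        _ ≤ 1 * (-D w) := mul_le_mul_of_nonneg_right (hF1 w) h
        _ = -D w := one_mul _
        _ ≤ max (-D w) 0 := le_max_left _ _
    · calc -(f (y + w) * D w) = f (y + w) * (-D w) := by ring
        _ ≤ 0 := mul_nonpos_of_nonneg_of_nonpos (hF0 w) h.le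
        _ ≤ max (-D w) 0 := le_max_right _ _
  have habs : |gS x - gS y| ≤ (1/2) * ∫ w, |D w| := by
    rw [hdiff]
    rw [abs_le]
    constructor <;> linarith
  -- Step C : L1 bound via chi-square
  have hshift : ∀ w, P (w - δ) = P w * Real.exp (δ ⬝ᵥ Sig⁻¹ *ᵥ w - q / 2) := fun w =>
    gauss_shift hSig δ w
  have hshift2 : ∀ w, P (w - (δ + δ)) =
      P w * Real.exp (2 * (δ ⬝ᵥ Sig⁻¹ *ᵥ w) - 2 * q) := by
    intro w
    rw [hPdef, gauss_shift hSig (δ + δ) w]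
    congr 2
    simp only [add_dotProduct, Matrix.mulVec_add, dotProduct_add, hqdef]
    ring
  set R := fun w => Real.exp q * P (w - (δ + δ)) - 2 * P (w - δ) + P w with hRdef
  have hkey : ∀ w, (D w) ^ 2 / P w = R w := by
    intro w
    have hpw := hPpos w
    have hE2 : Real.exp q * Real.exp (2 * (δ ⬝ᵥ Sig⁻¹ *ᵥ w) - 2 * q)
        = Real.exp (δ ⬝ᵥ Sig⁻¹ *ᵥ w - q / 2) ^ 2 := by
      rw [sq, ← Real.exp_add, ← Real.exp_add]
      ring_nf
    simp only [hDdef, hRdef]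
    rw [hshift w, hshift2 w, div_eq_iff hpw.ne']
    linear_combination (-(P w) ^ 2) * hE2
  have hRnn : ∀ w, 0 ≤ R w := fun w =>
    (hkey w) ▸ div_nonneg (sq_nonneg _) (hPpos w).le
  have hRi : Integrable R := ((hP2i.const_mul _).sub (hP1i.const_mul 2)).add hPi
  have hRint : ∫ w, R w = Real.exp q - 1 := by
    have hRb : Integrable (fun w => Real.exp q * P (w - (δ + δ))) := hP2i.const_mul _
    have hRc : Integrable (fun w => 2 * P (w - δ)) := hP1i.const_mul 2
    have hRa : Integrable (fun w => Real.exp q * P (w - (δ + δ)) - 2 * P (w - δ)) :=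
      hRb.sub hRc
    simp only [hRdef]
    rw [integral_add hRa hPi, integral_sub hRb hRc,
      MeasureTheory.integral_const_mul, MeasureTheory.integral_const_mul,
      MeasureTheory.integral_sub_right_eq_self P (δ + δ),
      MeasureTheory.integral_sub_right_eq_self P δ,
      hPdef, integral_gauss hSig]
    ring
  -- Hölder (Cauchy-Schwarz)
  have hsq : ∀ w, Real.sqrt (P w) ≠ 0 := fun w => (Real.sqrt_pos.2 (hPpos w)).ne'
  set φ := fun w => ENNReal.ofReal (|D w| / Real.sqrt (P w)) with hφdef
  set ψ := fun w => ENNReal.ofReal (Real.sqrt (P w)) with hψdef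
  have hφm : Measurable φ :=
    (ENNReal.continuous_ofReal.comp
      (hDc.abs.div (hPc.sqrt) hsq)).measurable
  have hψm : Measurable ψ :=
    (ENNReal.continuous_ofReal.comp hPc.sqrt).measurable
  have hconj : Real.HolderConjugate 2 2 := Real.HolderConjugate.two_two
  have hold := ENNReal.lintegral_mul_le_Lp_mul_Lq volume hconj hφm.aemeasurable
    hψm.aemeasurable
  have hmul : ∀ w, φ w * ψ w = ENNReal.ofReal (|D w|) := by
    intro w
    simp only [hφdef, hψdef]
    rw [← ENNReal.ofReal_mul (by positivity), div_mul_cancel₀ _ (hsq w)]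
  have hφ2 : ∀ w, φ w ^ (2:ℝ) = ENNReal.ofReal (D w ^ 2 / P w) := by
    intro w
    simp only [hφdef]
    rw [ENNReal.ofReal_rpow_of_nonneg (by positivity) (by norm_num)]
    congr 1
    rw [show ((2:ℝ)) = ((2:ℕ):ℝ) by norm_num, Real.rpow_natCast]
    rw [div_pow, sq_abs, Real.sq_sqrt (hPpos w).le]
  have hψ2 : ∀ w, ψ w ^ (2:ℝ) = ENNReal.ofReal (P w) := by
    intro w
    simp only [hψdef]
    rw [ENNReal.ofReal_rpow_of_nonneg (Real.sqrt_nonneg _) (by norm_num)]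
    congr 1
    rw [show ((2:ℝ)) = ((2:ℕ):ℝ) by norm_num, Real.rpow_natCast]
    exact Real.sq_sqrt (hPpos w).le
  have hI1 : ∫⁻ w, ψ w ^ (2:ℝ) = 1 := by
    simp_rw [hψ2]
    rw [← MeasureTheory.ofReal_integral_eq_lintegral_ofReal hPi
      (Filter.Eventually.of_forall fun w => (hPpos w).le)]
    rw [hPdef, integral_gauss hSig, ENNReal.ofReal_one]
  have hI2 : ∫⁻ w, φ w ^ (2:ℝ) = ENNReal.ofReal (Real.exp q - 1) := by
    simp_rw [hφ2, hkey]
    rw [← MeasureTheory.ofReal_integral_eq_lintegral_ofReal hRi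
      (Filter.Eventually.of_forall hRnn), hRint]
  have hL1 : ∫ w, |D w| ≤ Real.sqrt (Real.exp q - 1) := by
    have hfinal : ENNReal.ofReal (∫ w, |D w|) ≤
        ENNReal.ofReal (Real.sqrt (Real.exp q - 1)) := by
      rw [MeasureTheory.ofReal_integral_eq_lintegral_ofReal hAbsi
        (Filter.Eventually.of_forall fun w => abs_nonneg _)]
      calc ∫⁻ w, ENNReal.ofReal (|D w|)
          = ∫⁻ w, (φ * ψ) w := by simp_rw [Pi.mul_apply, hmul]
        _ ≤ (∫⁻ w, φ w ^ (2:ℝ)) ^ ((1:ℝ)/2) * (∫⁻ w, ψ w ^ (2:ℝ)) ^ ((1:ℝ)/2) := hold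
        _ = ENNReal.ofReal (Real.exp q - 1) ^ ((1:ℝ)/2) := by
            rw [hI1, hI2, ENNReal.one_rpow, mul_one]
        _ = ENNReal.ofReal (Real.sqrt (Real.exp q - 1)) := by
            rw [ENNReal.ofReal_rpow_of_nonneg
              (sub_nonneg.2 (Real.one_le_exp hq.le)) (by norm_num),
              Real.sqrt_eq_rpow]
    exact (ENNReal.ofReal_le_ofReal_iff (Real.sqrt_nonneg _)).1 hfinal
  -- Step D : conclude
  have hgoal : Real.sqrt (2 / Real.pi) * Real.sqrt q = Real.sqrt (2 / Real.pi * q) :=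
    (Real.sqrt_mul (by positivity) q).symm
  rw [hgoal]
  rcases le_or_gt q (Real.pi / 2) with hcase | hcase
  · calc |gS x - gS y| ≤ (1/2) * ∫ w, |D w| := habs
      _ ≤ (1/2) * Real.sqrt (Real.exp q - 1) := by linarith
      _ = Real.sqrt ((Real.exp q - 1) / 4) := by
          rw [Real.sqrt_div (sub_nonneg.2 (Real.one_le_exp hq.le)),
            show Real.sqrt 4 = 2 by
              rw [show (4:ℝ) = 2 ^ 2 by norm_num, Real.sqrt_sq (by norm_num)]]
          ring
      _ ≤ Real.sqrt (2 / Real.pi * q) := by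
          apply Real.sqrt_le_sqrt
          have h := chord_bound hq.le hcase
          calc (Real.exp q - 1) / 4 ≤ (8 / Real.pi * q) / 4 := by linarith
            _ = 2 / Real.pi * q := by ring
  · have htriv : ∫ w, |D w| ≤ 2 := by
      have hmono : ∫ w, |D w| ≤ ∫ w, (P (w - δ) + P w) := by
        apply integral_mono hAbsi (hP1i.add hPi)
        intro w
        simp only [hDdef]
        calc |P (w - δ) - P w| ≤ |P (w - δ)| + |P w| := abs_sub _ _
          _ = P (w - δ) + P w := by
              rw [abs_of_nonneg (hPpos _).le, abs_of_nonneg (hPpos _).le]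
      rw [integral_add hP1i hPi, MeasureTheory.integral_sub_right_eq_self P δ,
        hPdef, integral_gauss hSig] at hmono
      linarith
    calc |gS x - gS y| ≤ (1/2) * ∫ w, |D w| := habs
      _ ≤ 1 := by linarith
      _ ≤ Real.sqrt (2 / Real.pi * q) := by
          rw [show (1:ℝ) = Real.sqrt 1 from Real.sqrt_one.symm]
          apply Real.sqrt_le_sqrt
          have hpi := Real.pi_pos
          rw [div_mul_eq_mul_div, le_div_iff₀ hpi]
          nlinarith
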